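/- Mackey formula for the transfer on abelianizations: let G be a finite group and H, K subgroups. Then the composite of the map H^{ab} → G^{ab} induced by inclusion followed by the transfer G^{ab} → K^{ab} equals the sum (in the abelian group K^{ab}, written additively) over a set of representatives x of the double cosets K\G/H of the composites H^{ab} → (K ∩ xHx⁻¹)^{ab} → K^{ab}, where the first map is the transfer from xHx⁻¹ to K ∩ xHx⁻¹ precomposed with the isomorphism induced by conjugation by x, and the second map is induced by the inclusion K ∩ xHx⁻¹ ≤ K. -/

import Mathlib

open Subgroup MonoidHom

section TransferSection

variable {G : Type*} [Group G] {K : Subgroup G}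

theorem section_mem {f : G ⧸ K → G} (hf : ∀ q, ((f q : G) : G ⧸ K) = q) (g : G) (q : G ⧸ K) :
    (f q)⁻¹ * g * f (g⁻¹ • q) ∈ K := by
  rw [mul_assoc]
  apply QuotientGroup.eq.mp
  rw [hf]
  calc q = g • (g⁻¹ • q) := (smul_inv_smul g q).symm
    _ = g • ((f (g⁻¹ • q) : G) : G ⧸ K) := by rw [hf]
    _ = ((g * f (g⁻¹ • q) : G) : G ⧸ K) := MulAction.Quotient.smul_mk K g _

theorem transfer_section [K.FiniteIndex] {A : Type*} [CommGroup A] (ϕ : K →* A)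
    {f : G ⧸ K → G} (hf : ∀ q, ((f q : G) : G ⧸ K) = q) (g : G) [Fintype (G ⧸ K)] :
    transfer ϕ g = ∏ q : G ⧸ K, ϕ ⟨(f q)⁻¹ * g * f (g⁻¹ • q), section_mem hf g q⟩ := by
  classical
  rw [transfer_def ϕ ⟨Set.range f, isComplement_range_left hf⟩ g]
  unfold Subgroup.leftTransversals.diff
  have huniv : @Finset.univ (G ⧸ K) K.fintypeQuotientOfFiniteIndex = Finset.univ := by
    congr!
  refine Finset.prod_congr huniv fun q _ => congrArg ϕ (Subtype.ext ?_)
  show (_ : G)⁻¹ * _ = _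
  rw [Subgroup.smul_apply_eq_smul_apply_inv_smul,
    Subgroup.IsComplement.leftQuotientEquiv_apply hf,
    Subgroup.IsComplement.leftQuotientEquiv_apply hf]
  simp [mul_assoc]

end TransferSection

namespace MackeyAux

variable {G : Type*} [Group G]

abbrev Cx (H : Subgroup G) (x : G) : Subgroup G := H.map (MulAut.conj x).toMonoidHom

abbrev Kx (H K : Subgroup G) (x : G) : Subgroup (Cx H x) := (K ⊓ Cx H x).subgroupOf (Cx H x)

lemma coe_mem_K {H K : Subgroup G} {x : G} {u : Cx H x} (hu : u ∈ Kx H K x) : (u : G) ∈ K :=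
  (Subgroup.mem_subgroupOf.mp hu).1

lemma exists_rep {H : Subgroup G} {x : G} (c : Cx H x) :
    ∃ h ∈ H, (c : G) = x * h * x⁻¹ := by
  obtain ⟨h, hh, hc⟩ := Subgroup.mem_map.mp c.2
  exact ⟨h, hh, hc.symm⟩

abbrev Idx (H K : Subgroup G) (R : Finset G) :=
  Σ x : {y : G // y ∈ R}, (Cx H x) ⧸ (Kx H K x)

noncomputable def val (H K : Subgroup G) (R : Finset G) (σ : Idx H K R) : G :=
  ((σ.1 : G))⁻¹ * ((σ.2.out : Cx H σ.1) : G)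

noncomputable def Fmap (H K : Subgroup G) (R : Finset G) (σ : Idx H K R) : G ⧸ K :=
  ↑(val H K R σ)

lemma Fmap_injective (H K : Subgroup G) (R : Finset G)
    (hR : ∀ d : DoubleCoset.Quotient (K : Set G) (H : Set G),
      ∃! x, x ∈ R ∧ DoubleCoset.mk K H x = d) :
    Function.Injective (Fmap H K R) := by
  rintro ⟨⟨x, hx⟩, p⟩ ⟨⟨y, hy⟩, r⟩ hF
  have hk : (val H K R ⟨⟨x, hx⟩, p⟩)⁻¹ * val H K R ⟨⟨y, hy⟩, r⟩ ∈ K :=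
    QuotientGroup.eq.mp hF
  obtain ⟨a, ha, hpa⟩ := exists_rep (H := H) (x := x) p.out
  obtain ⟨b, hb, hrb⟩ := exists_rep (H := H) (x := y) r.out
  have hxy : x = y := by
    have hkval : x * (a⁻¹ * b) * y⁻¹ ∈ K := by
      have : (val H K R ⟨⟨x, hx⟩, p⟩)⁻¹ * val H K R ⟨⟨y, hy⟩, r⟩
          = x * (a⁻¹ * b) * y⁻¹ := by
        simp only [val, hpa, hrb]
        group
      rwa [this] at hk
    have hdxy : DoubleCoset.mk K H y = DoubleCoset.mk K H x := by
      rw [DoubleCoset.eq]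
      refine ⟨x * (a⁻¹ * b) * y⁻¹, hkval, (a⁻¹ * b)⁻¹, H.inv_mem (H.mul_mem (H.inv_mem ha) hb), ?_⟩
      group
    exact (hR (DoubleCoset.mk K H x)).unique ⟨hx, rfl⟩ ⟨hy, hdxy⟩
  subst hxy
  have : hy = hx := rfl
  subst this
  have hpr : p = r := by
    have hKin : ((p.out)⁻¹ * r.out : Cx H x) ∈ Kx H K x := by
      rw [Subgroup.mem_subgroupOf]
      refine ⟨?_, Subgroup.mul_mem _ (Subgroup.inv_mem _ (p.out).2) (r.out).2⟩
      have : (val H K R ⟨⟨x, hy⟩, p⟩)⁻¹ * val H K R ⟨⟨x, hy⟩, r⟩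
          = ((p.out : Cx H x) : G)⁻¹ * ((r.out : Cx H x) : G) := by
        simp only [val]
        group
      rw [Subgroup.coe_mul, Subgroup.coe_inv, ← this]
      exact hk
    calc p = QuotientGroup.mk p.out := (QuotientGroup.out_eq' p).symm
      _ = QuotientGroup.mk r.out := QuotientGroup.eq.mpr hKin
      _ = r := QuotientGroup.out_eq' r
  subst hpr
  rfl


lemma Fmap_surjective (H K : Subgroup G) (R : Finset G)
    (hR : ∀ d : DoubleCoset.Quotient (K : Set G) (H : Set G),
      ∃! x, x ∈ R ∧ DoubleCoset.mk K H x = d) :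
    Function.Surjective (Fmap H K R) := by
  intro q
  obtain ⟨x, ⟨hxR, hxd⟩, -⟩ := hR (DoubleCoset.mk K H q.out⁻¹)
  obtain ⟨k, hk, h, hh, hq⟩ := (DoubleCoset.eq K H x q.out⁻¹).mp hxd
  have hcmem : x * h⁻¹ * x⁻¹ ∈ Cx H x := ⟨h⁻¹, H.inv_mem hh, rfl⟩
  set c : Cx H x := ⟨x * h⁻¹ * x⁻¹, hcmem⟩ with hc
  set p : (Cx H x) ⧸ (Kx H K x) := QuotientGroup.mk c with hp
  refine ⟨⟨⟨x, hxR⟩, p⟩, ?_⟩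
  have hu : (c⁻¹ * p.out : Cx H x) ∈ Kx H K x :=
    QuotientGroup.eq.mp (QuotientGroup.out_eq' p).symm
  have hKu : ((c⁻¹ * p.out : Cx H x) : G) ∈ K := coe_mem_K hu
  have hqout : q.out = (k * x * h)⁻¹ := by
    rw [← hq]; group
  show QuotientGroup.mk (val H K R ⟨⟨x, hxR⟩, p⟩) = q
  have hval : val H K R ⟨⟨x, hxR⟩, p⟩
      = h⁻¹ * x⁻¹ * ((c⁻¹ * p.out : Cx H x) : G) := by
    simp only [val, Subgroup.coe_mul, Subgroup.coe_inv, hc]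
    group
  rw [hval, ← QuotientGroup.out_eq' q]
  apply QuotientGroup.eq.mpr
  rw [hqout]
  have : (h⁻¹ * x⁻¹ * ((c⁻¹ * p.out : Cx H x) : G))⁻¹ * (k * x * h)⁻¹
      = (((c⁻¹ * p.out : Cx H x) : G))⁻¹ * k⁻¹ := by group
  rw [this]
  exact K.mul_mem (K.inv_mem hKu) (K.inv_mem hk)

lemma smul_out_rel (H K : Subgroup G) {x : G} (gC : Cx H x) (p : (Cx H x) ⧸ (Kx H K x)) :
    ((gC⁻¹ * p.out)⁻¹ * (gC⁻¹ • p).out : Cx H x) ∈ Kx H K x := by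
  apply QuotientGroup.eq.mp
  calc QuotientGroup.mk (s := Kx H K x) (gC⁻¹ * p.out)
      = QuotientGroup.mk (gC⁻¹ • p.out) := by rw [smul_eq_mul]
    _ = gC⁻¹ • (QuotientGroup.mk p.out) := (MulAction.Quotient.smul_mk _ _ _).symm
    _ = gC⁻¹ • p := by rw [QuotientGroup.out_eq']
    _ = QuotientGroup.mk (gC⁻¹ • p).out := (QuotientGroup.out_eq' _).symm

lemma Fmap_equivariant (H K : Subgroup G) (R : Finset G) (σ : Idx H K R)
    (g : G) (gC : Cx H σ.1) (hgCcoe : (gC : G) = (σ.1 : G) * g * (σ.1 : G)⁻¹) :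
    g⁻¹ • Fmap H K R σ = Fmap H K R ⟨σ.1, gC⁻¹ • σ.2⟩ := by
  obtain ⟨⟨x, hx⟩, p⟩ := σ
  have hw := smul_out_rel H K gC p
  have hwK : (((gC⁻¹ * p.out)⁻¹ * (gC⁻¹ • p).out : Cx H x) : G) ∈ K := coe_mem_K hw
  show g⁻¹ • (QuotientGroup.mk (val H K R ⟨⟨x, hx⟩, p⟩)) = QuotientGroup.mk (val H K R _)
  rw [MulAction.Quotient.smul_mk]
  apply QuotientGroup.eq.mpr
  have hsplit : (((gC⁻¹ • p).out : Cx H x) : G)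
      = ((gC⁻¹ * p.out : Cx H x) : G) * (((gC⁻¹ * p.out)⁻¹ * (gC⁻¹ • p).out : Cx H x) : G) := by
    rw [← Subgroup.coe_mul]
    congr 1
    group
  have : (g⁻¹ • val H K R ⟨⟨x, hx⟩, p⟩)⁻¹ * val H K R ⟨⟨x, hx⟩, gC⁻¹ • p⟩
      = (((gC⁻¹ * p.out)⁻¹ * (gC⁻¹ • p).out : Cx H x) : G) := by
    have hmul : ((gC⁻¹ * p.out : Cx H x) : G) = (x * g * x⁻¹)⁻¹ * (p.out : G) := by
      rw [Subgroup.coe_mul, Subgroup.coe_inv, hgCcoe]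
    simp only [val, smul_eq_mul]
    rw [hsplit, hmul]
    group
  rw [this]
  exact hwK

end MackeyAux




/-- The Mackey summand attached to a double-coset representative `x`: the composite
`H^{ab} → (xHx⁻¹)^{ab} → (K ∩ xHx⁻¹)^{ab} → K^{ab}`, where the first map is induced by
conjugation by `x`, the second is the transfer, and the third is induced by inclusion. -/
noncomputable def mackeyTerm {G : Type*} [Group G] [Finite G] (H K : Subgroup G) (x : G) :
    Abelianization H →* Abelianization K :=
  let C : Subgroup G := H.map (MulAut.conj x).toMonoidHom
  let incl : ((K ⊓ C).subgroupOf C) →* K :=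
    (Subgroup.inclusion inf_le_left).comp
      (Subgroup.subgroupOfEquivOfLe inf_le_right).toMonoidHom
  (Abelianization.map incl).comp
    ((Abelianization.lift (MonoidHom.transfer
        (Abelianization.of :
          ((K ⊓ C).subgroupOf C) →* Abelianization ((K ⊓ C).subgroupOf C)))).comp
      (Abelianization.map
        (Subgroup.equivMapOfInjective H (MulAut.conj x).toMonoidHom
          (MulAut.conj x).injective).toMonoidHom))

open MackeyAux in
lemma mackeyTerm_apply {G : Type*} [Group G] [Finite G] (H K : Subgroup G) (x : G) (h0 : H)
    [Fintype ((Cx H x) ⧸ (Kx H K x))] :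
    mackeyTerm H K x (Abelianization.of h0) =
      ∏ p : (Cx H x) ⧸ (Kx H K x),
        Abelianization.of
          (((Subgroup.inclusion (inf_le_left : K ⊓ Cx H x ≤ K)).comp
            (Subgroup.subgroupOfEquivOfLe
              (inf_le_right : K ⊓ Cx H x ≤ Cx H x)).toMonoidHom)
            (⟨(p.out)⁻¹ * (⟨x * (h0 : G) * x⁻¹, ⟨(h0 : G), h0.2, rfl⟩⟩ : Cx H x) *
                ((⟨x * (h0 : G) * x⁻¹, ⟨(h0 : G), h0.2, rfl⟩⟩ : Cx H x)⁻¹ • p).out,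
              section_mem (K := Kx H K x) (fun q => QuotientGroup.out_eq' q) _ p⟩ :
              Kx H K x)) := by
  have h1 : (Subgroup.equivMapOfInjective H (MulAut.conj x).toMonoidHom
      (MulAut.conj x).injective).toMonoidHom h0
      = (⟨x * (h0 : G) * x⁻¹, ⟨(h0 : G), h0.2, rfl⟩⟩ : Cx H x) :=
    Subtype.ext (H.coe_equivMapOfInjective_apply _ _ h0)
  simp only [mackeyTerm, MonoidHom.comp_apply, Abelianization.map_of, h1,
    Abelianization.lift_apply_of]
  rw [transfer_section (Abelianization.of) (fun q => QuotientGroup.out_eq' q)]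
  rw [map_prod]
  simp only [Abelianization.map_of, MonoidHom.comp_apply]

/-- Mackey formula for the transfer on abelianizations: the composite of
`H^{ab} → G^{ab}` (induced by inclusion) with the transfer `G^{ab} → K^{ab}` equals the
sum over double-coset representatives `x` of `K\G/H` of the Mackey summands. -/
theorem mackey_transfer_formula {G : Type*} [Group G] [Finite G] (H K : Subgroup G)
    (R : Finset G)
    (hR : ∀ d : DoubleCoset.Quotient (K : Set G) (H : Set G),
      ∃! x, x ∈ R ∧ DoubleCoset.mk K H x = d)
    (h : Abelianization H) :
    Abelianization.lift
        (MonoidHom.transfer (Abelianization.of : K →* Abelianization K))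
        (Abelianization.map H.subtype h) =
      ∏ x ∈ R, mackeyTerm H K x h := by
  classical
  letI : Fintype (G ⧸ K) := Fintype.ofFinite _
  letI instF : ∀ x : G, Fintype ((MackeyAux.Cx H x) ⧸ (MackeyAux.Kx H K x)) :=
    fun _ => Fintype.ofFinite _
  suffices key : ∀ h0 : H,
      MonoidHom.transfer (Abelianization.of : K →* Abelianization K) (h0 : G) =
        ∏ x ∈ R, mackeyTerm H K x (Abelianization.of h0) by
    have hhom : (Abelianization.lift
        (MonoidHom.transfer (Abelianization.of : K →* Abelianization K))).comp
        (Abelianization.map H.subtype) = ∏ x ∈ R, mackeyTerm H K x := by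
      apply Abelianization.hom_ext
      apply MonoidHom.ext
      intro h0
      simp only [MonoidHom.comp_apply, Abelianization.map_of, Abelianization.lift_apply_of,
        MonoidHom.finset_prod_apply, Subgroup.coe_subtype]
      exact key h0
    calc Abelianization.lift
          (MonoidHom.transfer (Abelianization.of : K →* Abelianization K))
          (Abelianization.map H.subtype h)
        = ((Abelianization.lift
            (MonoidHom.transfer (Abelianization.of : K →* Abelianization K))).comp
            (Abelianization.map H.subtype)) h := rfl
      _ = (∏ x ∈ R, mackeyTerm H K x) h := by rw [hhom]
      _ = ∏ x ∈ R, mackeyTerm H K x h := by rw [MonoidHom.finset_prod_apply]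
  intro h0
  have hbij : Function.Bijective (MackeyAux.Fmap H K R) :=
    ⟨MackeyAux.Fmap_injective H K R hR, MackeyAux.Fmap_surjective H K R hR⟩
  let E : MackeyAux.Idx H K R ≃ G ⧸ K := Equiv.ofBijective _ hbij
  have hf : ∀ q : G ⧸ K, ((MackeyAux.val H K R (E.symm q) : G) : G ⧸ K) = q := fun q => by
    show MackeyAux.Fmap H K R (E.symm q) = q
    exact E.apply_symm_apply q
  rw [transfer_section (Abelianization.of) hf (h0 : G)]
  rw [← Equiv.prod_comp E]
  rw [← Finset.univ_sigma_univ, Finset.prod_sigma]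
  simp only [mackeyTerm_apply]
  rw [← Finset.prod_coe_sort R]
  refine Finset.prod_congr rfl fun x _ => Finset.prod_congr rfl fun p _ => ?_
  refine congrArg Abelianization.of (Subtype.ext ?_)
  set gC : MackeyAux.Cx H (x : G) :=
    (⟨(x : G) * (h0 : G) * (x : G)⁻¹, ⟨(h0 : G), h0.2, rfl⟩⟩ : MackeyAux.Cx H (x : G)) with hgC
  have e0 : E.symm (E ⟨x, p⟩) = ⟨x, p⟩ := E.symm_apply_apply _
  have e2 : ((h0 : G))⁻¹ • E ⟨x, p⟩ = E ⟨x, gC⁻¹ • p⟩ :=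
    MackeyAux.Fmap_equivariant H K R ⟨x, p⟩ (h0 : G) gC rfl
  show (MackeyAux.val H K R (E.symm (E ⟨x, p⟩)))⁻¹ * (h0 : G) *
      MackeyAux.val H K R (E.symm (((h0 : G))⁻¹ • E ⟨x, p⟩)) = _
  rw [e2, e0, E.symm_apply_apply]
  have hincl : ∀ u : MackeyAux.Kx H K (x : G),
      ((((Subgroup.inclusion (inf_le_left : K ⊓ MackeyAux.Cx H (x : G) ≤ K)).comp
        (Subgroup.subgroupOfEquivOfLe
          (inf_le_right : K ⊓ MackeyAux.Cx H (x : G) ≤ MackeyAux.Cx H (x : G))).toMonoidHom)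
        u : K) : G) = ((u : MackeyAux.Cx H (x : G)) : G) := fun u => rfl
  rw [hincl]
  simp only [MackeyAux.val, Subgroup.coe_mul, Subgroup.coe_inv, hgC, Subgroup.coe_mk]
  group
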